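/- The map Π : Z⁴ → R × Z², sending (u,v,w,z) to ((2u + (√5-1)(v+w) + (3-√5)z)/(25+11√5), u, v), is an injective group homomorphism, and the set of first coordinates attained equals the subgroup ((5-√5)/10)Z + (√5/5)Z of R. -/

import Mathlib

private lemma sqrt5_sq : Real.sqrt 5 * Real.sqrt 5 = 5 :=
  Real.mul_self_sqrt (by norm_num)

private lemma sqrt5_pos : (0:ℝ) < Real.sqrt 5 := Real.sqrt_pos.mpr (by norm_num)

private lemma den_ne : (25 + 11 * Real.sqrt 5 : ℝ) ≠ 0 := by positivity

private lemma irr5 : Irrational (Real.sqrt 5) := by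
  have := (by norm_num : Nat.Prime 5).irrational_sqrt
  simpa using this

private lemma key (u v w z : ℤ) :
    (2 * u + (Real.sqrt 5 - 1) * (v + w) + (3 - Real.sqrt 5) * z) /
        (25 + 11 * Real.sqrt 5) =
      ((5 - Real.sqrt 5) / 10) * ((5 * u - 8 * (v + w) + 13 * z : ℤ) : ℝ) +
        (Real.sqrt 5 / 5) * (((-3) * u + 5 * (v + w) - 8 * z : ℤ) : ℝ) := by
  have hs2 : Real.sqrt 5 ^ 2 = 5 := Real.sq_sqrt (by norm_num)
  rw [div_eq_iff den_ne]
  push_cast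
  ring_nf
  rw [hs2]
  ring

theorem Pi_injective_hom_image
    (Pi : ℤ × ℤ × ℤ × ℤ → ℝ × ℤ × ℤ)
    (hPi : ∀ u v w z : ℤ, Pi (u, v, w, z) =
      ((2 * u + (Real.sqrt 5 - 1) * (v + w) + (3 - Real.sqrt 5) * z) /
        (25 + 11 * Real.sqrt 5), u, v)) :
    Function.Injective Pi ∧
    (∀ a b : ℤ × ℤ × ℤ × ℤ, Pi (a + b) = Pi a + Pi b) ∧
    {r : ℝ | ∃ p : ℤ × ℤ × ℤ × ℤ, (Pi p).1 = r} =
      {r : ℝ | ∃ n m : ℤ,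
        r = ((5 - Real.sqrt 5) / 10) * n + (Real.sqrt 5 / 5) * m} := by
  have hs := sqrt5_sq
  have hd := den_ne
  refine ⟨?_, ?_, ?_⟩
  · rintro ⟨u1, v1, w1, z1⟩ ⟨u2, v2, w2, z2⟩ h
    rw [hPi, hPi] at h
    simp only [Prod.mk.injEq] at h
    obtain ⟨h1, hu, hv⟩ := h
    subst hu hv
    have h1' : (2 * (u1:ℝ) + (Real.sqrt 5 - 1) * (v1 + w1) + (3 - Real.sqrt 5) * z1)
        = (2 * u1 + (Real.sqrt 5 - 1) * (v1 + w2) + (3 - Real.sqrt 5) * z2) :=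
      (div_left_inj' hd).mp h1
    have hc : ((w1 - z1 - (w2 - z2) : ℤ) : ℝ) * Real.sqrt 5
        = ((w1 - 3 * z1 - (w2 - 3 * z2) : ℤ) : ℝ) := by
      push_cast
      linarith [h1']
    have hc0 : (w1 - z1 - (w2 - z2) : ℤ) = 0 := by
      by_contra hne
      exact (irr5.intCast_mul hne).ne_int _ hc
    have hd0 : ((w1 - 3 * z1 - (w2 - 3 * z2) : ℤ) : ℝ) = 0 := by
      rw [← hc, hc0]; push_cast; ring
    have hd0' : (w1 - 3 * z1 - (w2 - 3 * z2) : ℤ) = 0 := by exact_mod_cast hd0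
    have : z1 = z2 := by omega
    have : w1 = w2 := by omega
    simp_all
  · rintro ⟨u1, v1, w1, z1⟩ ⟨u2, v2, w2, z2⟩
    show Pi (u1 + u2, v1 + v2, w1 + w2, z1 + z2) = _
    rw [hPi, hPi, hPi]
    refine Prod.ext ?_ rfl
    show _ = (_ + _ : ℝ)
    push_cast
    field_simp
    ring
  · ext r
    simp only [Set.mem_setOf_eq]
    constructor
    · rintro ⟨⟨u, v, w, z⟩, hp⟩
      rw [hPi] at hp
      refine ⟨5 * u - 8 * (v + w) + 13 * z, (-3) * u + 5 * (v + w) - 8 * z, ?_⟩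
      rw [← hp]
      exact key u v w z
    · rintro ⟨n, m, rfl⟩
      refine ⟨(5 * n + 8 * m, 3 * n + 5 * m, 0, 0), ?_⟩
      rw [hPi]
      show _ / _ = _
      have := key (5 * n + 8 * m) (3 * n + 5 * m) 0 0
      rw [this]
      push_cast
      ring
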